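/- Fix J ≥ 2, y ∈ {0,...,J-1}, a subset S ⊆ {0,...,J-1}, and probability mass functions p1, p0 on {0,...,J-1} with p1(y) > 0. There exists a joint distribution of (Y1, Y0) on {0,...,J-1}² with marginals p1 and p0 such that pr(Y1 = y, Y0 ∈ S) = max(0, p1(y) + p0(S) - 1), where p0(S) = Σ_{ℓ∈S} p0(ℓ). -/

import Mathlib

open Finset

noncomputable def ivlen (c d a b : ℝ) : ℝ := max 0 (min d b - max c a)

lemma ivlen_nonneg (c d a b : ℝ) : 0 ≤ ivlen c d a b := le_max_left _ _

lemma ivlen_symm (c d a b : ℝ) : ivlen c d a b = ivlen a b c d := by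
  simp [ivlen, min_comm, max_comm]

lemma ivlen_seg (c d s m t : ℝ) (h1 : s ≤ m) (h2 : m ≤ t) :
    ivlen c d s m + ivlen c d m t = ivlen c d s t := by
  simp only [ivlen, min_def, max_def]
  split_ifs <;> linarith

lemma sum_ivlen_offsets (p : ℕ → ℝ) (hp : ∀ j, 0 ≤ p j) (c d s0 : ℝ) (T : Finset ℕ) :
    ∑ l ∈ T, ivlen c d (s0 + ∑ j ∈ T.filter (· < l), p j)
        (s0 + ∑ j ∈ T.filter (· < l), p j + p l)
      = ivlen c d s0 (s0 + ∑ l ∈ T, p l) := by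
  induction T using Finset.induction_on_max with
  | empty =>
    have h : min d s0 - max c s0 ≤ 0 :=
      sub_nonpos.mpr (le_trans (min_le_right _ _) (le_max_right _ _))
    simp [ivlen, max_eq_left h]
  | insert a T ha ih =>
    have haT : a ∉ T := fun h => lt_irrefl a (ha a h)
    have hfa : (insert a T).filter (· < a) = T := by
      ext x
      simp only [mem_filter, mem_insert]
      constructor
      · rintro ⟨h | h, hlt⟩
        · omega
        · exact h
      · intro hx; exact ⟨Or.inr hx, ha x hx⟩
    have hfl : ∀ l ∈ T, (insert a T).filter (· < l) = T.filter (· < l) := by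
      intro l hl
      ext x
      simp only [mem_filter, mem_insert]
      constructor
      · rintro ⟨h | h, hlt⟩
        · exact absurd hlt (by have := ha l hl; omega)
        · exact ⟨h, hlt⟩
      · rintro ⟨h, hlt⟩; exact ⟨Or.inr h, hlt⟩
    have hsum : ∑ l ∈ insert a T, p l = ∑ l ∈ T, p l + p a := by
      rw [Finset.sum_insert haT]; ring
    have hrest : ∑ x ∈ T, ivlen c d (s0 + ∑ j ∈ (insert a T).filter (· < x), p j)
        (s0 + ∑ j ∈ (insert a T).filter (· < x), p j + p x)
        = ∑ x ∈ T, ivlen c d (s0 + ∑ j ∈ T.filter (· < x), p j)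
        (s0 + ∑ j ∈ T.filter (· < x), p j + p x) :=
      Finset.sum_congr rfl (fun l hl => by rw [hfl l hl])
    rw [hsum, Finset.sum_insert haT, hfa, hrest, ih]
    have hT0 : 0 ≤ ∑ l ∈ T, p l := Finset.sum_nonneg fun i _ => hp i
    have := ivlen_seg c d s0 (s0 + ∑ l ∈ T, p l) (s0 + ∑ l ∈ T, p l + p a)
      (by linarith) (by linarith [hp a])
    rw [show s0 + (∑ l ∈ T, p l + p a) = s0 + ∑ l ∈ T, p l + p a by ring]
    linarith


theorem lower_frechet_sharp (J : ℕ) (hJ : 2 ≤ J) (y : ℕ) (hy : y < J)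
    (S : Finset ℕ) (p1 p0 : ℕ → ℝ)
    (h1 : ∀ k, 0 ≤ p1 k) (h0 : ∀ l, 0 ≤ p0 l)
    (hs1 : ∑ k ∈ Finset.range J, p1 k = 1) (hs0 : ∑ l ∈ Finset.range J, p0 l = 1)
    (h1supp : ∀ k, J ≤ k → p1 k = 0) (h0supp : ∀ l, J ≤ l → p0 l = 0)
    (hpos : 0 < p1 y) :
    ∃ q : ℕ → ℕ → ℝ,
      (∀ k l, 0 ≤ q k l) ∧
      (∀ k, ∑ l ∈ Finset.range J, q k l = p1 k) ∧
      (∀ l, ∑ k ∈ Finset.range J, q k l = p0 l) ∧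
      ∑ l ∈ (Finset.range J).filter (· ∈ S), q y l
        = max 0 (p1 y + (∑ l ∈ (Finset.range J).filter (· ∈ S), p0 l) - 1) := by
  classical
  set b : ℝ := ∑ l ∈ (Finset.range J).filter (· ∈ S), p0 l with hbdef
  set A : ℕ → ℝ := fun k => if k = y then 0 else p1 y + ∑ j ∈ (range k).erase y, p1 j
    with hAdef
  set B : ℕ → ℝ := fun l => if l ∈ S then (1 - b) + ∑ j ∈ (range l).filter (· ∈ S), p0 j
    else ∑ j ∈ (range l).filter (· ∉ S), p0 j with hBdef
  -- basic bounds
  have hb0 : 0 ≤ b := Finset.sum_nonneg fun i _ => h0 i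
  have hb1 : b ≤ 1 := by
    rw [hbdef, ← hs0]
    exact Finset.sum_le_sum_of_subset_of_nonneg (filter_subset _ _) fun i _ _ => h0 i
  have hfilt : ∑ l ∈ (range J).filter (· ∈ S), p0 l
      + ∑ l ∈ (range J).filter (· ∉ S), p0 l = 1 := by
    rw [Finset.sum_filter_add_sum_filter_not, hs0]
  have hbc : ∑ l ∈ (range J).filter (· ∉ S), p0 l = 1 - b := by
    rw [hbdef]; linarith
  have hp1y1 : p1 y ≤ 1 := by
    rw [← hs1]
    exact Finset.single_le_sum (fun i _ => h1 i) (mem_range.mpr hy)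
  have hyJ : y ∈ range J := mem_range.mpr hy
  -- partial sum bounds
  have h1m : ∀ m, ∑ j ∈ range m, p1 j ≤ 1 := by
    intro m
    rw [← Finset.sum_filter_add_sum_filter_not (range m) (· < J)]
    have h2 : ∑ j ∈ (range m).filter (fun j => ¬ j < J), p1 j = 0 :=
      Finset.sum_eq_zero fun j hj => h1supp j (by simp at hj; omega)
    have h3 : ∑ j ∈ (range m).filter (· < J), p1 j ≤ 1 := by
      rw [← hs1]
      refine Finset.sum_le_sum_of_subset_of_nonneg ?_ fun i _ _ => h1 i
      intro x hx; simp at hx ⊢; omega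
    linarith
  have hEr : ∀ m, ∑ j ∈ (range m).erase y, p1 j ≤ 1 - p1 y := by
    intro m
    by_cases hym : y < m
    · rw [Finset.sum_erase_eq_sub (mem_range.mpr hym)]
      linarith [h1m m]
    · rw [Finset.erase_eq_of_notMem (by simp; omega)]
      have hsub : insert y (range m) ⊆ range J := by
        intro x hx; simp at hx ⊢; omega
      have : ∑ j ∈ insert y (range m), p1 j ≤ 1 := by
        rw [← hs1]
        exact Finset.sum_le_sum_of_subset_of_nonneg hsub fun i _ _ => h1 i
      rw [Finset.sum_insert (by simp; omega)] at this
      linarith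
  have hS : ∀ m, ∑ j ∈ (range m).filter (· ∈ S), p0 j ≤ b := by
    intro m
    rw [← Finset.sum_filter_add_sum_filter_not ((range m).filter (· ∈ S)) (· < J)]
    have h2 : ∑ j ∈ ((range m).filter (· ∈ S)).filter (fun j => ¬ j < J), p0 j = 0 :=
      Finset.sum_eq_zero fun j hj => h0supp j (by simp at hj; omega)
    have h3 : ∑ j ∈ ((range m).filter (· ∈ S)).filter (· < J), p0 j ≤ b := by
      rw [hbdef]
      refine Finset.sum_le_sum_of_subset_of_nonneg ?_ fun i _ _ => h0 i
      intro x hx; simp at hx ⊢; exact ⟨hx.2, hx.1.2⟩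
    linarith
  have hNS : ∀ m, ∑ j ∈ (range m).filter (· ∉ S), p0 j ≤ 1 - b := by
    intro m
    rw [← Finset.sum_filter_add_sum_filter_not ((range m).filter (· ∉ S)) (· < J)]
    have h2 : ∑ j ∈ ((range m).filter (· ∉ S)).filter (fun j => ¬ j < J), p0 j = 0 :=
      Finset.sum_eq_zero fun j hj => h0supp j (by simp at hj; omega)
    have h3 : ∑ j ∈ ((range m).filter (· ∉ S)).filter (· < J), p0 j ≤ 1 - b := by
      rw [← hbc]
      refine Finset.sum_le_sum_of_subset_of_nonneg ?_ fun i _ _ => h0 i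
      intro x hx; simp at hx ⊢; exact ⟨hx.2, hx.1.2⟩
    linarith
  -- bounds on A, B
  have hA0 : ∀ k, 0 ≤ A k := by
    intro k
    rw [hAdef]
    by_cases hk : k = y
    · simp [hk]
    · simp only [if_neg hk]
      have : 0 ≤ ∑ j ∈ (range k).erase y, p1 j := Finset.sum_nonneg fun i _ => h1 i
      linarith [h1 y]
  have hA1 : ∀ k, A k + p1 k ≤ 1 := by
    intro k
    by_cases hk : k = y
    · have h' : A k = 0 := by simp [hAdef, hk]
      rw [h', hk]
      linarith
    · have h' : A k = p1 y + ∑ j ∈ (range k).erase y, p1 j := by simp [hAdef, hk]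
      rw [h']
      have hins : insert k ((range k).erase y) = (range (k+1)).erase y := by
        ext x
        simp only [mem_insert, mem_erase, mem_range]
        omega
      have : ∑ j ∈ (range k).erase y, p1 j + p1 k
          = ∑ j ∈ (range (k+1)).erase y, p1 j := by
        rw [← hins, Finset.sum_insert (by simp)]; ring
      linarith [hEr (k+1), this]
  have hB0 : ∀ l, 0 ≤ B l := by
    intro l
    rw [hBdef]
    by_cases hl : l ∈ S
    · simp only [if_pos hl]
      have : 0 ≤ ∑ j ∈ (range l).filter (· ∈ S), p0 j := Finset.sum_nonneg fun i _ => h0 i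
      linarith
    · simp only [if_neg hl]
      exact Finset.sum_nonneg fun i _ => h0 i
  have hB1 : ∀ l, B l + p0 l ≤ 1 := by
    intro l
    rw [hBdef]
    by_cases hl : l ∈ S
    · simp only [if_pos hl]
      have hins : insert l ((range l).filter (· ∈ S)) = (range (l+1)).filter (· ∈ S) := by
        ext x
        simp only [mem_insert, mem_filter, mem_range]
        constructor
        · rintro (rfl | ⟨hx, hxS⟩)
          · exact ⟨by omega, hl⟩
          · exact ⟨by omega, hxS⟩
        · rintro ⟨hx, hxS⟩
          rcases Nat.lt_succ_iff_lt_or_eq.mp hx with h | rfl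
          · exact Or.inr ⟨h, hxS⟩
          · exact Or.inl rfl
      have : ∑ j ∈ (range l).filter (· ∈ S), p0 j + p0 l
          = ∑ j ∈ (range (l+1)).filter (· ∈ S), p0 j := by
        rw [← hins, Finset.sum_insert (by simp)]; ring
      linarith [hS (l+1), this]
    · simp only [if_neg hl]
      have hins : insert l ((range l).filter (· ∉ S)) = (range (l+1)).filter (· ∉ S) := by
        ext x
        simp only [mem_insert, mem_filter, mem_range]
        constructor
        · rintro (rfl | ⟨hx, hxS⟩)
          · exact ⟨by omega, hl⟩
          · exact ⟨by omega, hxS⟩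
        · rintro ⟨hx, hxS⟩
          rcases Nat.lt_succ_iff_lt_or_eq.mp hx with h | rfl
          · exact Or.inr ⟨h, hxS⟩
          · exact Or.inl rfl
      have : ∑ j ∈ (range l).filter (· ∉ S), p0 j + p0 l
          = ∑ j ∈ (range (l+1)).filter (· ∉ S), p0 j := by
        rw [← hins, Finset.sum_insert (by simp)]; ring
      linarith [hNS (l+1), this]
  -- column sums (over l) via the offsets lemma
  have hB_not : ∀ l ∈ (range J).filter (· ∉ S),
      B l = 0 + ∑ j ∈ ((range J).filter (· ∉ S)).filter (· < l), p0 j := by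
    intro l hl
    simp only [mem_filter, mem_range] at hl
    have hset : (range l).filter (· ∉ S) = ((range J).filter (· ∉ S)).filter (· < l) := by
      ext x
      simp only [mem_filter, mem_range]
      constructor
      · rintro ⟨hx, hxS⟩; exact ⟨⟨by omega, hxS⟩, hx⟩
      · rintro ⟨⟨_, hxS⟩, hx⟩; exact ⟨hx, hxS⟩
    rw [hBdef]
    simp only [if_neg hl.2, hset, zero_add]
  have hB_in : ∀ l ∈ (range J).filter (· ∈ S),
      B l = (1 - b) + ∑ j ∈ ((range J).filter (· ∈ S)).filter (· < l), p0 j := by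
    intro l hl
    simp only [mem_filter, mem_range] at hl
    have hset : (range l).filter (· ∈ S) = ((range J).filter (· ∈ S)).filter (· < l) := by
      ext x
      simp only [mem_filter, mem_range]
      constructor
      · rintro ⟨hx, hxS⟩; exact ⟨⟨by omega, hxS⟩, hx⟩
      · rintro ⟨⟨_, hxS⟩, hx⟩; exact ⟨hx, hxS⟩
    rw [hBdef]
    simp only [if_pos hl.2, hset]
  have col_not : ∀ c d : ℝ,
      ∑ l ∈ (range J).filter (· ∉ S), ivlen c d (B l) (B l + p0 l)
        = ivlen c d 0 (1 - b) := by
    intro c d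
    rw [Finset.sum_congr rfl (fun l hl => by rw [hB_not l hl])]
    rw [sum_ivlen_offsets p0 h0 c d 0, hbc, zero_add]
  have col_in : ∀ c d : ℝ,
      ∑ l ∈ (range J).filter (· ∈ S), ivlen c d (B l) (B l + p0 l)
        = ivlen c d (1 - b) 1 := by
    intro c d
    rw [Finset.sum_congr rfl (fun l hl => by rw [hB_in l hl])]
    rw [sum_ivlen_offsets p0 h0 c d (1 - b), ← hbdef]
    norm_num
  have colmarg : ∀ c d : ℝ,
      ∑ l ∈ range J, ivlen c d (B l) (B l + p0 l) = ivlen c d 0 1 := by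
    intro c d
    rw [← Finset.sum_filter_add_sum_filter_not (range J) (· ∈ S)]
    rw [col_in c d, col_not c d]
    have := ivlen_seg c d 0 (1 - b) 1 (by linarith) (by linarith)
    linarith
  -- row sums (over k)
  have hA_er : ∀ k ∈ (range J).erase y,
      A k = p1 y + ∑ j ∈ ((range J).erase y).filter (· < k), p1 j := by
    intro k hk
    simp only [mem_erase, mem_range] at hk
    have hset : (range k).erase y = ((range J).erase y).filter (· < k) := by
      ext x
      simp only [mem_filter, mem_erase, mem_range]
      constructor
      · rintro ⟨hxy, hx⟩; exact ⟨⟨hxy, by omega⟩, hx⟩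
      · rintro ⟨⟨hxy, _⟩, hx⟩; exact ⟨hxy, hx⟩
    rw [hAdef]
    simp only [if_neg hk.1, hset]
  have row_er : ∀ c d : ℝ,
      ∑ k ∈ (range J).erase y, ivlen c d (A k) (A k + p1 k)
        = ivlen c d (p1 y) 1 := by
    intro c d
    rw [Finset.sum_congr rfl (fun k hk => by rw [hA_er k hk])]
    rw [sum_ivlen_offsets p1 h1 c d (p1 y)]
    rw [Finset.sum_erase_eq_sub hyJ, hs1]
    norm_num
  have rowmarg : ∀ c d : ℝ,
      ∑ k ∈ range J, ivlen c d (A k) (A k + p1 k) = ivlen c d 0 1 := by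
    intro c d
    rw [← Finset.insert_erase hyJ, Finset.sum_insert (Finset.notMem_erase _ _)]
    rw [row_er c d]
    have hAy : A y = 0 := by rw [hAdef]; simp
    rw [hAy, zero_add]
    exact ivlen_seg c d 0 (p1 y) 1 (h1 y) hp1y1
  -- assemble
  refine ⟨fun k l => ivlen (A k) (A k + p1 k) (B l) (B l + p0 l),
    fun k l => ivlen_nonneg _ _ _ _, ?_, ?_, ?_⟩
  · intro k
    rw [colmarg (A k) (A k + p1 k), ivlen,
      min_eq_left (show A k + p1 k ≤ (1:ℝ) from hA1 k),
      max_eq_left (show (0:ℝ) ≤ A k from hA0 k),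
      show A k + p1 k - A k = p1 k by ring]
    exact max_eq_right (h1 k)
  · intro l
    rw [Finset.sum_congr rfl (fun k _ => ivlen_symm (A k) (A k + p1 k) (B l) (B l + p0 l))]
    rw [rowmarg (B l) (B l + p0 l), ivlen,
      min_eq_left (show B l + p0 l ≤ (1:ℝ) from hB1 l),
      max_eq_left (show (0:ℝ) ≤ B l from hB0 l),
      show B l + p0 l - B l = p0 l by ring]
    exact max_eq_right (h0 l)
  · have hAy : A y = 0 := by rw [hAdef]; simp
    rw [col_in (A y) (A y + p1 y), hAy, zero_add, ivlen,
      min_eq_left hp1y1,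
      max_eq_right (show (0:ℝ) ≤ 1 - b by linarith),
      show p1 y - (1 - b) = p1 y + b - 1 by ring]
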